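/- Let λ ≤ k be positive integers, let G be a weighted graph whose connected components G_1,…,G_s all satisfy λ(G_i) = λ, and let Λ = ⟨λ_1,…,λ_t⟩ be a nondecreasing tuple with entries in ℕ∪{+∞}. Then (G,w,Λ,k) is a yes-instance of CGWC if and only if there exists F ⊆ E(G) with w(F) ≤ k such that, denoting by {j_1,…,j_p} the set of indices j with E(G_j)∩F ≠ ∅, we have p ≤ k, and for each i ∈ {1,…,p} there is a subtuple Λ^i = ⟨λ^i_1,…,λ^i_{t_i}⟩ ⊆ Λ of length t_i such that: (i) t_1+⋯+t_p = t−s+p; (ii) for each i, the graph G_{j_i}−F has exactly t_i connected components C^i_1,…,C^i_{t_i} with λ(C^i_h) ≥ λ^i_h for every h; and (iii) Λ ⪯ (s−p)⟨λ⟩ + Λ^1 + ⋯ + Λ^p. -/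

import Mathlib

open scoped Classical

/-- The weighted connectivity of `(G,w)`: the largest `k ∈ ℕ∞` such that deleting any
edge set of total weight at most `k - 1` leaves `G` connected (`+∞` for a one-vertex
graph). -/
noncomputable def weightConn {V : Type*} [Fintype V] (G : SimpleGraph V) (w : Sym2 V → ℕ) :
    ℕ∞ :=
  sSup {k : ℕ∞ | ∀ S : Finset (Sym2 V), ↑S ⊆ G.edgeSet →
    (∑ e ∈ S, (w e : ℕ∞)) < k → (G.deleteEdges ↑S).Connected}

/-- The weighted connectivity of the subgraph of `(G,w)` induced by the vertex set `C`. -/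
noncomputable def compConn {V : Type*} [Fintype V] (G : SimpleGraph V) (w : Sym2 V → ℕ)
    (C : Set V) : ℕ∞ :=
  weightConn (G.induce C) (fun e => w (Sym2.map Subtype.val e))

/-- The multiset of the weighted connectivities of the connected components of `(G,w)`. -/
noncomputable def connMultiset {V : Type*} [Fintype V] (G : SimpleGraph V)
    (w : Sym2 V → ℕ) : Multiset ℕ∞ :=
  (@Finset.univ G.ConnectedComponent (Fintype.ofFinite _)).val.map
    (fun c => compConn G w c.supp)

/-- `α ⪯ β` for multisets viewed as nondecreasing tuples: the tuples have the same length
and the `i`-th smallest entry of `α` is at most the `i`-th smallest entry of `β`. -/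
def DomLE (α β : Multiset ℕ∞) : Prop :=
  List.Forall₂ (· ≤ ·) (α.sort (· ≤ ·)) (β.sort (· ≤ ·))

/-- `(G,w,Λ,k)` is a yes-instance of CGWC: there is `F ⊆ E(G)` with `w(F) ≤ k` such that
`G - F` has exactly `Λ.card` connected components `G_1,…,G_t` with `λ(G_i) ≥ λ_i`
(where `Λ = ⟨λ_1 ≤ … ≤ λ_t⟩`). -/
def IsYes {V : Type*} [Fintype V] (G : SimpleGraph V) (w : Sym2 V → ℕ)
    (Λ : Multiset ℕ∞) (k : ℕ) : Prop :=
  ∃ F : Finset (Sym2 V), ↑F ⊆ G.edgeSet ∧ (∑ e ∈ F, w e) ≤ k ∧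
    DomLE Λ (connMultiset (G.deleteEdges ↑F) w)

/-- The connected component `c` of `G` contains an edge of `F`. -/
def Touched {V : Type*} (G : SimpleGraph V) (F : Finset (Sym2 V))
    (c : G.ConnectedComponent) : Prop :=
  ∃ e ∈ F, ∀ v ∈ e, v ∈ c.supp

/-! ### Auxiliary lemmas: `DomLE` vs `Multiset.Rel` -/

lemma rel_of_forall₂ {α : Type*} {r : α → α → Prop} :
    ∀ {l₁ l₂ : List α}, List.Forall₂ r l₁ l₂ → Multiset.Rel r ↑l₁ ↑l₂ := by
  intro l₁ l₂ h
  induction h with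
  | nil => simp [Multiset.Rel.zero]
  | cons h _ ih => exact Multiset.Rel.cons h ih

lemma forall₂_of_rel_sorted {l₁ l₂ : List ℕ∞} (h₁ : l₁.Pairwise (· ≤ ·))
    (h₂ : l₂.Pairwise (· ≤ ·)) (h : Multiset.Rel (· ≤ ·) (l₁ : Multiset ℕ∞) (l₂ : Multiset ℕ∞)) :
    List.Forall₂ (· ≤ ·) l₁ l₂ := by
  induction l₁ generalizing l₂ with
  | nil =>
    have h0 : (l₂ : Multiset ℕ∞) = 0 := by
      rw [show ((([] : List ℕ∞)) : Multiset ℕ∞) = 0 from rfl] at h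
      rwa [Multiset.rel_zero_left] at h
    rw [show l₂ = [] by simpa using h0]
    exact List.Forall₂.nil
  | cons x l₁' ih =>
    cases l₂ with
    | nil =>
      exfalso
      rw [show ((([] : List ℕ∞)) : Multiset ℕ∞) = 0 from rfl, Multiset.rel_zero_right] at h
      simp at h
    | cons y l₂' =>
      rw [show ((x :: l₁' : List ℕ∞) : Multiset ℕ∞) = x ::ₘ (l₁' : Multiset ℕ∞) from rfl,
        show ((y :: l₂' : List ℕ∞) : Multiset ℕ∞) = y ::ₘ (l₂' : Multiset ℕ∞) from rfl] at h
      rw [Multiset.rel_cons_right] at h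
      obtain ⟨a, as', hay, has, heq⟩ := h
      have hxa : x ≤ a := by
        have ha : a ∈ (x ::ₘ (l₁' : Multiset ℕ∞)) := heq ▸ Multiset.mem_cons_self _ _
        rcases Multiset.mem_cons.mp ha with rfl | ha
        · exact le_refl _
        · exact (List.pairwise_cons.mp h₁).1 a (by exact_mod_cast ha)
      have hxy : x ≤ y := hxa.trans hay
      have hrel : Multiset.Rel (· ≤ ·) (l₁' : Multiset ℕ∞) (l₂' : Multiset ℕ∞) := by
        rcases Multiset.cons_eq_cons.mp heq with ⟨rfl, rfl⟩ | ⟨hne, cs, hcs1, hcs2⟩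
        · exact has
        · rw [hcs2] at has
          rw [Multiset.rel_cons_left] at has
          obtain ⟨b, bs', hxb, hcb, hbs⟩ := has
          have hyb : y ≤ b := by
            have : b ∈ (l₂' : Multiset ℕ∞) := hbs ▸ Multiset.mem_cons_self _ _
            exact (List.pairwise_cons.mp h₂).1 b (by exact_mod_cast this)
          rw [hcs1, hbs]
          exact Multiset.Rel.cons (hay.trans hyb) hcb
      exact List.Forall₂.cons hxy (ih (List.pairwise_cons.mp h₁).2 (List.pairwise_cons.mp h₂).2 hrel)

lemma domLE_iff_rel (α β : Multiset ℕ∞) :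
    DomLE α β ↔ Multiset.Rel (· ≤ ·) α β := by
  constructor
  · intro h
    have := rel_of_forall₂ h
    rwa [Multiset.sort_eq, Multiset.sort_eq] at this
  · intro h
    exact forall₂_of_rel_sorted (Multiset.pairwise_sort _ _) (Multiset.pairwise_sort _ _)
      (by rwa [Multiset.sort_eq, Multiset.sort_eq])

/-! ### Auxiliary lemmas: multiset sums and relations -/

lemma rel_sum {ι α β : Type*} {r : α → β → Prop} (s : Finset ι)
    {f : ι → Multiset α} {g : ι → Multiset β}
    (h : ∀ c ∈ s, Multiset.Rel r (f c) (g c)) :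
    Multiset.Rel r (∑ c ∈ s, f c) (∑ c ∈ s, g c) := by
  induction s using Finset.induction_on with
  | empty => simp [Multiset.Rel.zero]
  | insert _ _ hnot ih =>
    rw [Finset.sum_insert hnot, Finset.sum_insert hnot]
    exact Multiset.Rel.add (h _ (Finset.mem_insert_self _ _))
      (ih fun c hc => h c (Finset.mem_insert_of_mem hc))

lemma rel_decomp_sum {ι α β : Type*} {r : α → β → Prop} (s : Finset ι)
    (Λ : Multiset α) (g : ι → Multiset β)
    (h : Multiset.Rel r Λ (∑ c ∈ s, g c)) :
    ∃ f : ι → Multiset α, Λ = ∑ c ∈ s, f c ∧ ∀ c ∈ s, Multiset.Rel r (f c) (g c) := by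
  induction s using Finset.induction_on generalizing Λ with
  | empty =>
    refine ⟨fun _ => 0, ?_, by simp⟩
    have h0 : Multiset.Rel r Λ 0 := by simpa using h
    simpa using Multiset.rel_zero_right.mp h0
  | @insert a s hnot ih =>
    rw [Finset.sum_insert hnot] at h
    rw [Multiset.rel_add_right] at h
    obtain ⟨Λa, Λrest, hΛa, hrest, rfl⟩ := h
    obtain ⟨f, rfl, hf⟩ := ih Λrest hrest
    refine ⟨fun c => if c = a then Λa else f c, ?_, ?_⟩
    · rw [Finset.sum_insert hnot, if_pos rfl]
      congr 1
      exact Finset.sum_congr rfl fun c hc => by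
        rw [if_neg (by rintro rfl; exact hnot hc)]
    · intro c hc
      rcases Finset.mem_insert.mp hc with rfl | hc
      · simpa using hΛa
      · have hne : c ≠ a := fun hca => hnot (hca ▸ hc)
        simpa [hne] using hf c hc

lemma sum_singleton_replicate {ι α : Type*} (s : Finset ι) (a : α) :
    ∑ _c ∈ s, ({a} : Multiset α) = Multiset.replicate s.card a := by
  induction s using Finset.induction_on with
  | empty => simp
  | insert _ _ hnot ih =>
    rw [Finset.sum_insert hnot, Finset.card_insert_of_notMem hnot, ih,
      Multiset.replicate_succ]
    rfl

lemma card_finset_sum {ι α : Type*} (s : Finset ι) (f : ι → Multiset α) :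
    Multiset.card (∑ c ∈ s, f c) = ∑ c ∈ s, Multiset.card (f c) := by
  induction s using Finset.induction_on with
  | empty => simp
  | insert _ _ hnot ih => rw [Finset.sum_insert hnot, Finset.sum_insert hnot, Multiset.card_add, ih]

lemma univ_eq_univ {α : Type*} (i1 i2 : Fintype α) :
    @Finset.univ α i1 = @Finset.univ α i2 := by
  cases Subsingleton.elim i1 i2; rfl

lemma map_val_eq_sum {α β : Type*} (s : Finset α) (f : α → β) :
    s.val.map f = ∑ x ∈ s, ({f x} : Multiset β) := by
  rw [Finset.sum]
  rw [show s.val.map (fun x => ({f x} : Multiset β)) = (s.val.map f).map (fun a => {a}) from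
    (Multiset.map_map _ _ _).symm]
  rw [Multiset.sum_map_singleton]

/-! ### Auxiliary lemmas: weighted connectivity under isomorphisms -/

lemma weightConn_congr_inst {V : Type*} (i1 i2 : Fintype V) (G : SimpleGraph V)
    (w : Sym2 V → ℕ) : @weightConn V i1 G w = @weightConn V i2 G w := by
  cases Subsingleton.elim i1 i2; rfl

lemma sym2_cancel {α β : Type*} (f : α → β) (g : β → α) (h : ∀ x, f (g x) = x)
    (e : Sym2 β) : Sym2.map f (Sym2.map g e) = e := by
  induction e with | _ a b => simp [h]

/-- An isomorphism between graphs-with-deleted-edges. -/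
def deleteEdgesIso {V₁ V₂ : Type*} {G₁ : SimpleGraph V₁} {G₂ : SimpleGraph V₂}
    (φ : G₁ ≃g G₂) (S₁ : Set (Sym2 V₁)) (S₂ : Set (Sym2 V₂))
    (hS : ∀ a b : V₁, s(a, b) ∈ S₁ ↔ s(φ a, φ b) ∈ S₂) :
    G₁.deleteEdges S₁ ≃g G₂.deleteEdges S₂ where
  toEquiv := φ.toEquiv
  map_rel_iff' := by
    intro a b
    simp only [SimpleGraph.deleteEdges_adj]
    exact and_congr φ.map_adj_iff (not_congr (hS a b).symm)

lemma weightConn_le_iso {V₁ V₂ : Type*} [Fintype V₁] [Fintype V₂]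
    {G₁ : SimpleGraph V₁} {G₂ : SimpleGraph V₂} (φ : G₁ ≃g G₂)
    (w₁ : Sym2 V₁ → ℕ) (w₂ : Sym2 V₂ → ℕ)
    (hw : ∀ e, w₂ (Sym2.map φ e) = w₁ e) :
    weightConn G₁ w₁ ≤ weightConn G₂ w₂ := by
  apply sSup_le_sSup
  intro κ hκ S₂ hS₂ hsum
  have hinj : Function.Injective (Sym2.map ⇑φ.symm) :=
    Sym2.map.injective φ.symm.injective
  set S₁ : Finset (Sym2 V₁) := S₂.image (Sym2.map ⇑φ.symm) with hS₁def
  have hmem : ∀ e, e ∈ S₁ ↔ Sym2.map ⇑φ e ∈ S₂ := by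
    intro e
    simp only [hS₁def, Finset.mem_image]
    constructor
    · rintro ⟨f, hf, rfl⟩
      rwa [sym2_cancel ⇑φ ⇑φ.symm (fun x => φ.apply_symm_apply x) f]
    · intro h
      exact ⟨Sym2.map ⇑φ e, h, sym2_cancel ⇑φ.symm ⇑φ (fun x => φ.symm_apply_apply x) e⟩
  have hsub : ↑S₁ ⊆ G₁.edgeSet := by
    intro e he
    rw [Finset.mem_coe, hS₁def, Finset.mem_image] at he
    obtain ⟨f, hf, rfl⟩ := he
    induction f with
    | _ a b =>
      have h2 : G₂.Adj a b := hS₂ hf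
      simpa using φ.symm.map_adj_iff.mpr h2
  have hsums : (∑ e ∈ S₁, (w₁ e : ℕ∞)) = ∑ e ∈ S₂, (w₂ e : ℕ∞) := by
    rw [hS₁def, Finset.sum_image (fun x _ y _ h => hinj h)]
    refine Finset.sum_congr rfl fun e _ => ?_
    rw [← hw (Sym2.map ⇑φ.symm e), sym2_cancel ⇑φ ⇑φ.symm (fun x => φ.apply_symm_apply x) e]
  have hconn := hκ S₁ hsub (hsums ▸ hsum)
  have hiso := deleteEdgesIso φ (↑S₁ : Set (Sym2 V₁)) (↑S₂ : Set (Sym2 V₂))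
    (fun a b => by simpa using hmem s(a, b))
  exact hiso.connected_iff.mp hconn

lemma weightConn_iso {V₁ V₂ : Type*} [Fintype V₁] [Fintype V₂]
    {G₁ : SimpleGraph V₁} {G₂ : SimpleGraph V₂} (φ : G₁ ≃g G₂)
    (w₁ : Sym2 V₁ → ℕ) (w₂ : Sym2 V₂ → ℕ)
    (hw : ∀ e, w₂ (Sym2.map φ e) = w₁ e) :
    weightConn G₁ w₁ = weightConn G₂ w₂ := by
  refine le_antisymm (weightConn_le_iso φ w₁ w₂ hw) (weightConn_le_iso φ.symm w₂ w₁ ?_)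
  intro e
  rw [← hw (Sym2.map ⇑φ.symm e), sym2_cancel ⇑φ ⇑φ.symm (fun x => φ.apply_symm_apply x) e]

/-- Induce-induce iso. -/
noncomputable def induceInduceIso {V : Type*} (K : SimpleGraph V) (A : Set V) (B : Set A) :
    (K.induce A).induce B ≃g K.induce (Subtype.val '' B) where
  toEquiv := Equiv.Set.image Subtype.val B Subtype.val_injective
  map_rel_iff' := by
    intro a b
    simp [Equiv.Set.image, Equiv.Set.imageOfInjOn]

lemma compConn_induce {V : Type*} (K : SimpleGraph V) [Fintype V] (w : Sym2 V → ℕ)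
    (A : Set V) (B : Set A) :
    compConn (K.induce A) (fun e => w (Sym2.map Subtype.val e)) B
      = compConn K w (Subtype.val '' B) := by
  unfold compConn
  refine weightConn_iso (induceInduceIso K A B) _ _ ?_
  intro e
  induction e with
  | _ a b => simp [induceInduceIso, Equiv.Set.image, Equiv.Set.imageOfInjOn]; rfl

lemma compConn_univ {V : Type*} (K : SimpleGraph V) [Fintype V] (w : Sym2 V → ℕ) :
    compConn K w Set.univ = weightConn K w := by
  unfold compConn
  refine weightConn_iso (SimpleGraph.induceUnivIso K) _ _ ?_
  intro e
  induction e with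
  | _ a b => simp [SimpleGraph.induceUnivIso]

/-! ### Auxiliary lemmas: reachability and components -/

open SimpleGraph in
lemma reachable_induce_of_closed {V : Type*} {K : SimpleGraph V} {s : Set V}
    (hcl : ∀ ⦃x y : V⦄, K.Adj x y → x ∈ s → y ∈ s)
    {u v : V} (hu : u ∈ s) (hv : v ∈ s) (h : K.Reachable u v) :
    (K.induce s).Reachable ⟨u, hu⟩ ⟨v, hv⟩ := by
  obtain ⟨p⟩ := h
  induction p with
  | nil => rfl
  | @cons u x v hadj p ih =>
    have hx : x ∈ s := hcl hadj hu
    have h1 : (K.induce s).Adj ⟨u, hu⟩ ⟨x, hx⟩ := by simpa using hadj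
    exact h1.reachable.trans (ih hx hv)

open SimpleGraph in
lemma reachable_of_induce {V : Type*} {K : SimpleGraph V} {s : Set V} {a b : s}
    (h : (K.induce s).Reachable a b) : K.Reachable ↑a ↑b :=
  h.map (SimpleGraph.Embedding.induce s).toHom

open SimpleGraph in
lemma supp_closed {V : Type*} {G H : SimpleGraph V} (hHG : H ≤ G) (c : G.ConnectedComponent) :
    ∀ ⦃x y : V⦄, H.Adj x y → x ∈ c.supp → y ∈ c.supp := by
  intro x y hxy hx
  have hadj : G.Adj x y := hHG hxy
  simp only [ConnectedComponent.mem_supp_iff] at hx ⊢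
  exact (ConnectedComponent.connectedComponentMk_eq_of_adj hadj.symm).trans hx

open SimpleGraph in
/-- The `H`-component associated to a component of the graph induced by `H` on a
`G`-component. -/
def toComp {V : Type*} {G H : SimpleGraph V} (c : G.ConnectedComponent)
    (e : (H.induce c.supp).ConnectedComponent) : H.ConnectedComponent :=
  e.map (SimpleGraph.Embedding.induce c.supp).toHom

open SimpleGraph in
lemma toComp_mk {V : Type*} {G H : SimpleGraph V} (c : G.ConnectedComponent) (v : c.supp) :
    toComp (H := H) c ((H.induce c.supp).connectedComponentMk v)
      = H.connectedComponentMk ↑v := rfl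

open SimpleGraph in
lemma pi_toComp {V : Type*} {G H : SimpleGraph V} (hHG : H ≤ G) (c : G.ConnectedComponent)
    (e : (H.induce c.supp).ConnectedComponent) :
    (toComp c e).map (Hom.ofLE hHG) = c := by
  refine e.ind ?_
  intro u
  rw [toComp_mk]
  simp only [ConnectedComponent.map_mk, Hom.ofLE_apply]
  exact u.2

open SimpleGraph in
lemma toComp_supp {V : Type*} {G H : SimpleGraph V} (hHG : H ≤ G) (c : G.ConnectedComponent)
    (e : (H.induce c.supp).ConnectedComponent) :
    (toComp c e).supp = Subtype.val '' e.supp := by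
  refine e.ind ?_
  intro u
  ext x
  rw [toComp_mk]
  simp only [ConnectedComponent.mem_supp_iff, Set.mem_image]
  constructor
  · intro hx
    have hr : H.Reachable x ↑u := ConnectedComponent.eq.mp hx
    have hxc : x ∈ c.supp := by
      have h1 : G.connectedComponentMk x = G.connectedComponentMk ↑u :=
        ConnectedComponent.sound (hr.mono hHG)
      exact (ConnectedComponent.mem_supp_iff _ _).mpr (h1.trans u.2)
    refine ⟨⟨x, hxc⟩, ?_, rfl⟩
    exact ConnectedComponent.sound (reachable_induce_of_closed (supp_closed hHG c) hxc u.2 hr)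
  · rintro ⟨y, hy, rfl⟩
    exact ConnectedComponent.sound (reachable_of_induce (ConnectedComponent.eq.mp hy))

open SimpleGraph in
lemma toComp_bijective {V : Type*} {G H : SimpleGraph V} (hHG : H ≤ G) :
    Function.Bijective
      (fun x : Σ c : G.ConnectedComponent, (H.induce c.supp).ConnectedComponent =>
        toComp x.1 x.2) := by
  constructor
  · rintro ⟨c, e⟩ ⟨c', e'⟩ hEq
    simp only at hEq
    have hc : c = c' := by
      rw [← pi_toComp hHG c e, ← pi_toComp hHG c' e', hEq]
    subst hc
    simp only [Sigma.mk.inj_iff, heq_eq_eq, true_and]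
    revert hEq
    refine ConnectedComponent.ind₂ ?_ e e'
    intro u v hEq
    rw [toComp_mk, toComp_mk] at hEq
    have hr : H.Reachable ↑u ↑v := ConnectedComponent.eq.mp hEq
    have := reachable_induce_of_closed (supp_closed hHG c) u.2 v.2 hr
    exact ConnectedComponent.sound this
  · intro d
    obtain ⟨v, rfl⟩ := d.exists_rep
    exact ⟨⟨G.connectedComponentMk v,
      (H.induce _).connectedComponentMk ⟨v, rfl⟩⟩, rfl⟩

lemma connMultiset_decomp {V : Type*} [Fintype V] {G H : SimpleGraph V} (hHG : H ≤ G)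
    (w : Sym2 V → ℕ) :
    connMultiset H w
      = ∑ c : G.ConnectedComponent,
          connMultiset (H.induce c.supp) (fun e => w (Sym2.map Subtype.val e)) := by
  unfold connMultiset
  rw [map_val_eq_sum]
  rw [univ_eq_univ (Fintype.ofFinite _) inferInstance]
  rw [← Fintype.sum_bijective _ (toComp_bijective hHG)
    (fun x : Σ c : G.ConnectedComponent, (H.induce c.supp).ConnectedComponent =>
      ({compConn H w (toComp x.1 x.2).supp} : Multiset ℕ∞))
    (fun d => ({compConn H w d.supp} : Multiset ℕ∞)) (fun x => rfl)]
  rw [show (Finset.univ : Finset ((c : G.ConnectedComponent) × (H.induce c.supp).ConnectedComponent))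
      = Finset.univ.sigma (fun _ => Finset.univ) from Finset.univ_sigma_univ.symm,
    Finset.sum_sigma]
  refine Finset.sum_congr rfl fun c _ => ?_
  rw [map_val_eq_sum, univ_eq_univ (Fintype.ofFinite _) inferInstance]
  refine Finset.sum_congr rfl fun e _ => ?_
  rw [toComp_supp hHG, ← compConn_induce]
  rfl

open SimpleGraph in
lemma induce_untouched_eq {V : Type*} {G : SimpleGraph V} {F : Finset (Sym2 V)}
    {c : G.ConnectedComponent} (hc : ¬ Touched G F c) :
    (G.deleteEdges ↑F).induce c.supp = G.induce c.supp := by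
  ext a b
  simp only [comap_adj, Function.Embedding.coe_subtype, deleteEdges_adj]
  constructor
  · exact fun h => h.1
  · intro h
    refine ⟨h, fun hmem => hc ⟨s(↑a, ↑b), hmem, ?_⟩⟩
    intro v hv
    rcases Sym2.mem_iff.mp hv with rfl | rfl
    · exact a.2
    · exact b.2

open SimpleGraph in
lemma induce_supp_connected {V : Type*} {G : SimpleGraph V} (c : G.ConnectedComponent) :
    (G.induce c.supp).Connected := by
  obtain ⟨v, hv⟩ := c.exists_rep
  rw [connected_iff_exists_forall_reachable]
  refine ⟨⟨v, hv⟩, ?_⟩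
  rintro ⟨u, hu⟩
  have hr : G.Reachable v u := by
    rw [ConnectedComponent.mem_supp_iff] at hu
    exact ConnectedComponent.eq.mp (hv.trans hu.symm)
  exact reachable_induce_of_closed (supp_closed le_rfl c) hv hu hr

open SimpleGraph in
lemma connMultiset_of_connected {W : Type*} [Fintype W] {K : SimpleGraph W}
    (hK : K.Connected) (w : Sym2 W → ℕ) :
    connMultiset K w = {weightConn K w} := by
  haveI : Subsingleton K.ConnectedComponent := hK.preconnected.subsingleton_connectedComponent
  haveI : Nonempty K.ConnectedComponent := Nonempty.map K.connectedComponentMk hK.nonempty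
  haveI : Inhabited K.ConnectedComponent := Classical.inhabited_of_nonempty ‹_›
  haveI : Unique K.ConnectedComponent := Unique.mk' _
  unfold connMultiset
  rw [univ_eq_univ (Fintype.ofFinite _) inferInstance, Finset.univ_unique]
  have hsupp : ∀ d : K.ConnectedComponent, d.supp = Set.univ := by
    intro d
    ext x
    simp only [ConnectedComponent.mem_supp_iff, Set.mem_univ, iff_true]
    exact Subsingleton.elim _ _
  simp only [Finset.singleton_val, Multiset.map_singleton]
  rw [hsupp _, compConn_univ]

/-- Let `λ ≤ k` be positive integers and `G` a weighted graph all of whose connected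
components have weighted connectivity exactly `λ`. Then `(G,w,Λ,k)` is a yes-instance of
CGWC iff there is `F ⊆ E(G)` with `w(F) ≤ k` such that, with `p ≤ k` components of `G`
containing an edge of `F`, each such component `c` carries a subtuple `Λ^c ⊆ Λ` such
that (i) the lengths `t_c` of the subtuples sum to `t − s + p` (where `s` is the number
of components of `G` and `t = |Λ|`); (ii) `G_c − F` has exactly `t_c` components whose
connectivities dominate `Λ^c`; and (iii) `Λ ⪯ (s−p)⟨λ⟩ + Σ_c Λ^c`. -/
theorem stmt_18 {V : Type*} [Fintype V] (G : SimpleGraph V) (w : Sym2 V → ℕ)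
    (hw : ∀ e ∈ G.edgeSet, 0 < w e) (lam k : ℕ) (hlam : 0 < lam) (hlamk : lam ≤ k)
    (hcomp : ∀ c : G.ConnectedComponent, compConn G w c.supp = (lam : ℕ∞))
    (Λ : Multiset ℕ∞) :
    IsYes G w Λ k ↔
      ∃ F : Finset (Sym2 V), ↑F ⊆ G.edgeSet ∧ (∑ e ∈ F, w e) ≤ k ∧
        Nat.card {c : G.ConnectedComponent // Touched G F c} ≤ k ∧
        ∃ Λs : {c : G.ConnectedComponent // Touched G F c} → Multiset ℕ∞,
          (∀ c, Λs c ≤ Λ) ∧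
          ((∑ᶠ c, (Λs c).card) + Nat.card G.ConnectedComponent =
            Multiset.card Λ + Nat.card {c : G.ConnectedComponent // Touched G F c}) ∧
          (∀ c, DomLE (Λs c)
            (connMultiset ((G.deleteEdges ↑F).induce c.1.supp)
              (fun e => w (Sym2.map Subtype.val e)))) ∧
          DomLE Λ
            (Multiset.replicate
                (Nat.card G.ConnectedComponent -
                  Nat.card {c : G.ConnectedComponent // Touched G F c}) (lam : ℕ∞) +
              ∑ᶠ c, Λs c) := by
  classical
  constructor
  · rintro ⟨F, hFsub, hFw, hdom⟩
    have hHG : G.deleteEdges (↑F : Set (Sym2 V)) ≤ G := SimpleGraph.deleteEdges_le _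
    set M : G.ConnectedComponent → Multiset ℕ∞ :=
      fun c => connMultiset ((G.deleteEdges (↑F : Set (Sym2 V))).induce c.supp)
        (fun e => w (Sym2.map Subtype.val e)) with hMdef
    set T : Finset G.ConnectedComponent := Finset.univ.filter (Touched G F) with hTdef
    have hmemT : ∀ c, c ∈ T ↔ Touched G F c := by intro c; simp [hTdef]
    have hMun : ∀ c, ¬ Touched G F c → M c = {(lam : ℕ∞)} := by
      intro c hc
      rw [hMdef]
      simp only []
      rw [induce_untouched_eq hc, connMultiset_of_connected (induce_supp_connected c)]
      have hcc := hcomp c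
      unfold compConn at hcc
      rw [← hcc]
      exact congrArg (fun x => ({x} : Multiset ℕ∞)) (weightConn_congr_inst _ _ _ _)
    have hrel : Multiset.Rel (· ≤ ·) Λ (∑ c : G.ConnectedComponent, M c) := by
      rw [domLE_iff_rel] at hdom
      rwa [connMultiset_decomp hHG w] at hdom
    obtain ⟨f, hΛeq, hf⟩ := rel_decomp_sum Finset.univ Λ M hrel
    have hcards : Nat.card {c // Touched G F c} = T.card := by
      rw [Nat.card_eq_fintype_card, Fintype.card_subtype, hTdef]
    have hscard : Nat.card G.ConnectedComponent = Fintype.card G.ConnectedComponent :=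
      Nat.card_eq_fintype_card
    have hsplitc : T.card + (Finset.univ.filter (fun c => ¬ Touched G F c)).card
        = Fintype.card G.ConnectedComponent := by
      rw [hTdef]
      rw [Finset.card_filter_add_card_filter_not (p := Touched G F)]
      exact Finset.card_univ
    have hTk : T.card ≤ k := by
      rcases T.eq_empty_or_nonempty with hT | ⟨c₀, hc₀⟩
      · rw [hT]; simpa using Nat.zero_le k
      · obtain ⟨e₀, he₀F, -⟩ := (hmemT c₀).mp hc₀
        haveI : Inhabited (Sym2 V) := ⟨e₀⟩
        have hmaps : ∀ c ∈ T,
            (fun c => if h : Touched G F c then h.choose else default) c ∈ F := by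
          intro c hc
          have hc1 : Touched G F c := (hmemT c).mp hc
          simp only [dif_pos hc1]
          exact hc1.choose_spec.1
        have hinj : Set.InjOn (fun c => if h : Touched G F c then h.choose else default) ↑T := by
          intro c hc c' hc' hEq
          have hc1 : Touched G F c := (hmemT c).mp hc
          have hc2 : Touched G F c' := (hmemT c').mp hc'
          simp only [dif_pos hc1, dif_pos hc2] at hEq
          have hx1 := hc1.choose_spec.2 hc1.choose.out.1 (Sym2.out_fst_mem _)
          have hx2 := hc2.choose_spec.2 hc2.choose.out.1 (Sym2.out_fst_mem _)
          rw [← hEq] at hx2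
          rw [SimpleGraph.ConnectedComponent.mem_supp_iff] at hx1 hx2
          rw [← hx1, ← hx2]
        have h1 : T.card ≤ F.card := Finset.card_le_card_of_injOn _ hmaps hinj
        have h2 : F.card ≤ ∑ e ∈ F, w e := by
          calc F.card = ∑ _e ∈ F, 1 := by simp
          _ ≤ ∑ e ∈ F, w e := Finset.sum_le_sum fun e he => hw e (hFsub he)
        omega
    refine ⟨F, hFsub, hFw, by rw [hcards]; exact hTk, fun c => f c.1, ?_, ?_, ?_, ?_⟩
    · intro c
      rw [hΛeq]
      exact Finset.single_le_sum (f := f) (fun i _ => Multiset.zero_le _) (Finset.mem_univ c.1)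
    · have hfs : (∑ᶠ c : {c // Touched G F c}, Multiset.card (f c.1))
          = ∑ c ∈ T, Multiset.card (f c) := by
        rw [finsum_eq_sum_of_fintype]
        exact (Finset.sum_subtype T hmemT (fun c => Multiset.card (f c))).symm
      rw [hfs, hcards, hscard, hΛeq, card_finset_sum]
      rw [← Finset.sum_filter_add_sum_filter_not Finset.univ (Touched G F)
        (fun c => Multiset.card (f c))]
      have huntouched : ∑ c ∈ Finset.univ.filter (fun c => ¬ Touched G F c),
          Multiset.card (f c) = (Finset.univ.filter (fun c => ¬ Touched G F c)).card := by
        rw [Finset.card_eq_sum_ones]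
        refine Finset.sum_congr rfl fun c hc => ?_
        have hcn : ¬ Touched G F c := (Finset.mem_filter.mp hc).2
        rw [Multiset.card_eq_card_of_rel (hf c (Finset.mem_univ _)), hMun c hcn,
          Multiset.card_singleton]
      rw [huntouched, ← hTdef]
      omega
    · intro c
      rw [domLE_iff_rel]
      exact hf c.1 (Finset.mem_univ _)
    · rw [domLE_iff_rel]
      have hfs2 : (∑ᶠ c : {c // Touched G F c}, f c.1) = ∑ c ∈ T, f c := by
        rw [finsum_eq_sum_of_fintype]
        exact (Finset.sum_subtype T hmemT f).symm
      rw [hfs2, hcards, hscard]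
      have hrepl : Fintype.card G.ConnectedComponent - T.card
          = (Finset.univ.filter (fun c => ¬ Touched G F c)).card := by omega
      rw [hrepl, ← sum_singleton_replicate]
      have hΛsplit : Λ = (∑ c ∈ Finset.univ.filter (fun c => ¬ Touched G F c), f c)
          + ∑ c ∈ T, f c := by
        rw [hΛeq,
          ← Finset.sum_filter_add_sum_filter_not Finset.univ (Touched G F) f, add_comm, hTdef]
      rw [hΛsplit]
      refine Multiset.Rel.add ?_ (Multiset.rel_refl_of_refl_on fun x _ => le_refl x)
      refine rel_sum _ fun c hc => ?_
      have hcn : ¬ Touched G F c := (Finset.mem_filter.mp hc).2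
      have hx := hf c (Finset.mem_univ _)
      rwa [hMun c hcn] at hx
  · rintro ⟨F, hFsub, hFw, hpk, Λs, hsubΛ, hcardeq, hdomc, hdomΛ⟩
    refine ⟨F, hFsub, hFw, ?_⟩
    have hHG : G.deleteEdges (↑F : Set (Sym2 V)) ≤ G := SimpleGraph.deleteEdges_le _
    set M : G.ConnectedComponent → Multiset ℕ∞ :=
      fun c => connMultiset ((G.deleteEdges (↑F : Set (Sym2 V))).induce c.supp)
        (fun e => w (Sym2.map Subtype.val e)) with hMdef
    set T : Finset G.ConnectedComponent := Finset.univ.filter (Touched G F) with hTdef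
    have hmemT : ∀ c, c ∈ T ↔ Touched G F c := by intro c; simp [hTdef]
    have hMun : ∀ c, ¬ Touched G F c → M c = {(lam : ℕ∞)} := by
      intro c hc
      rw [hMdef]
      simp only []
      rw [induce_untouched_eq hc, connMultiset_of_connected (induce_supp_connected c)]
      have hcc := hcomp c
      unfold compConn at hcc
      rw [← hcc]
      exact congrArg (fun x => ({x} : Multiset ℕ∞)) (weightConn_congr_inst _ _ _ _)
    have hcards : Nat.card {c // Touched G F c} = T.card := by
      rw [Nat.card_eq_fintype_card, Fintype.card_subtype, hTdef]
    have hscard : Nat.card G.ConnectedComponent = Fintype.card G.ConnectedComponent :=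
      Nat.card_eq_fintype_card
    have hsplitc : T.card + (Finset.univ.filter (fun c => ¬ Touched G F c)).card
        = Fintype.card G.ConnectedComponent := by
      rw [hTdef]
      rw [Finset.card_filter_add_card_filter_not (p := Touched G F)]
      exact Finset.card_univ
    rw [domLE_iff_rel, connMultiset_decomp hHG w]
    rw [domLE_iff_rel] at hdomΛ
    have hfs : (∑ᶠ c, Λs c)
        = ∑ c ∈ T, (fun c => if h : Touched G F c then Λs ⟨c, h⟩ else 0) c := by
      rw [finsum_eq_sum_of_fintype,
        Finset.sum_subtype T hmemT (fun c => if h : Touched G F c then Λs ⟨c, h⟩ else 0)]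
      refine Finset.sum_congr rfl fun x _ => ?_
      rw [dif_pos x.2]
    have hstep : Multiset.Rel (· ≤ ·)
        (Multiset.replicate
          (Nat.card G.ConnectedComponent -
            Nat.card {c : G.ConnectedComponent // Touched G F c}) (lam : ℕ∞) +
          ∑ᶠ c, Λs c)
        (∑ c : G.ConnectedComponent, M c) := by
      rw [← Finset.sum_filter_not_add_sum_filter Finset.univ (Touched G F) M]
      refine Multiset.Rel.add ?_ ?_
      · have heq1 : ∑ c ∈ Finset.univ.filter (fun c => ¬ Touched G F c), M c
            = ∑ c ∈ Finset.univ.filter (fun c => ¬ Touched G F c), ({(lam : ℕ∞)} : Multiset ℕ∞) :=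
          Finset.sum_congr rfl fun c hc => hMun c (Finset.mem_filter.mp hc).2
        rw [heq1, sum_singleton_replicate, hcards, hscard,
          show Fintype.card G.ConnectedComponent - T.card
            = (Finset.univ.filter (fun c => ¬ Touched G F c)).card from by omega]
        exact Multiset.rel_refl_of_refl_on fun x _ => le_refl x
      · rw [hfs, hTdef]
        refine rel_sum _ fun c hc => ?_
        have hcT : Touched G F c := (Finset.mem_filter.mp hc).2
        rw [dif_pos hcT]
        have hd := hdomc ⟨c, hcT⟩
        rw [domLE_iff_rel] at hd
        exact hd
    exact Multiset.Rel.trans _ hdomΛ hstep
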